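/- Let ⟨·,·⟩ be an antisymmetric bilinear form on ℤⁿ with radical C, and let I be a Lie ideal of ℚ[ℤⁿ] (bracket [w,v] = ⟨w,v⟩·(w+v)). Then I equals the direct sum of a family of 'primitive' ideals ℚ·{f_α(x) : x ∈ ℤⁿ \ C} (where f_α(x) = Σᵢ qᵢ·(cᵢ+x) for fixed distinct cᵢ ∈ C and nonzero qᵢ ∈ ℚ depending on α) together with a ℚ-subspace of the span of basis elements indexed by C. Conversely, any such direct sum is an ideal. -/

import Mathlib

/-- The bracket on the free `ℚ`-module on `ℤⁿ` defined on basis elements by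
`[w, v] = ⟨w, v⟩ • (w + v)` and extended `ℚ`-bilinearly. -/
noncomputable def brQ {n : ℕ} (B : (Fin n → ℤ) → (Fin n → ℤ) → ℤ)
    (x y : (Fin n → ℤ) →₀ ℚ) : (Fin n → ℤ) →₀ ℚ :=
  x.sum fun w a => y.sum fun v b => Finsupp.single (w + v) (a * b * (B w v : ℚ))

/-- A primitive datum `φ` is a nonzero finitely supported function supported on the
radical `C`; the corresponding primitive ideal is the span of the elements
`f_φ(x) = Σ_c φ(c) · (c + x)` for `x ∉ C`. -/
noncomputable def primitiveIdeal {n : ℕ} (B : (Fin n → ℤ) → (Fin n → ℤ) → ℤ)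
    (φ : (Fin n → ℤ) →₀ ℚ) : Submodule ℚ ((Fin n → ℤ) →₀ ℚ) :=
  Submodule.span ℚ
    {v | ∃ x : Fin n → ℤ, (¬ ∀ y, B x y = 0) ∧
      v = φ.sum fun c qc => Finsupp.single (c + x) qc}

open Finsupp
open scoped Classical

section StmtAux

variable {n : ℕ} (B : (Fin n → ℤ) →ₗ[ℤ] (Fin n → ℤ) →ₗ[ℤ] ℤ)

/-- The operator `f ↦ [f, single y 1]`. -/
noncomputable def Bop (y : Fin n → ℤ) : ((Fin n → ℤ) →₀ ℚ) →ₗ[ℚ] ((Fin n → ℤ) →₀ ℚ) :=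
  Finsupp.lsum ℚ fun w => (B w y : ℚ) • Finsupp.lsingle (w + y)

lemma Bop_single (y w : Fin n → ℤ) (a : ℚ) :
    Bop B y (Finsupp.single w a) = Finsupp.single (w + y) ((B w y : ℚ) * a) := by
  simp [Bop, Finsupp.smul_single]

lemma Bop_apply (y : Fin n → ℤ) (f : (Fin n → ℤ) →₀ ℚ) :
    Bop B y f = f.sum fun w a => Finsupp.single (w + y) ((B w y : ℚ) * a) := by
  rw [Bop, Finsupp.lsum_apply]
  refine Finsupp.sum_congr fun w hw => ?_
  simp [Finsupp.smul_single]

lemma brQ_eq_sum (x y : (Fin n → ℤ) →₀ ℚ) :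
    brQ (fun a b => B a b) x y = y.sum fun v b => b • Bop B v x := by
  rw [brQ, Finsupp.sum_comm]
  refine Finsupp.sum_congr fun v hv => ?_
  rw [Bop_apply, Finsupp.smul_sum]
  refine Finsupp.sum_congr fun w hw => ?_
  rw [Finsupp.smul_single]
  congr 1
  rw [smul_eq_mul]; ring

lemma Bop_eq_brQ (y : Fin n → ℤ) (x : (Fin n → ℤ) →₀ ℚ) :
    Bop B y x = brQ (fun a b => B a b) x (Finsupp.single y 1) := by
  rw [brQ, Bop_apply]
  refine Finsupp.sum_congr fun w hw => ?_
  rw [Finsupp.sum_single_index (by simp)]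
  congr 1
  ring

lemma ideal_iff (I : Submodule ℚ ((Fin n → ℤ) →₀ ℚ)) :
    (∀ x ∈ I, ∀ y, brQ (fun a b => B a b) x y ∈ I) ↔
      (∀ y, ∀ x ∈ I, Bop B y x ∈ I) := by
  constructor
  · intro h y x hx
    rw [Bop_eq_brQ]
    exact h x hx _
  · intro h x hx y
    rw [brQ_eq_sum]
    refine Submodule.finsuppSum_mem _ _ _ _ fun v hv => ?_
    exact Submodule.smul_mem _ _ (h v x hx)

lemma Bvv (hB : ∀ x y, B x y = - B y x) (v : Fin n → ℤ) : B v v = 0 := by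
  have := hB v v; omega

/-- The diagonal operator `T_{-2y} ∘ T_y ∘ T_y`. -/
noncomputable def Qop (y : Fin n → ℤ) : ((Fin n → ℤ) →₀ ℚ) →ₗ[ℚ] ((Fin n → ℤ) →₀ ℚ) :=
  (Bop B (-(2 • y))) ∘ₗ (Bop B y) ∘ₗ (Bop B y)

lemma Qop_single (hB : ∀ x y, B x y = - B y x) (y w : Fin n → ℤ) (a : ℚ) :
    Qop B y (Finsupp.single w a) = Finsupp.single w (((-2 * (B w y)^3 : ℤ) : ℚ) * a) := by
  have h1 : B (w + y) y = B w y := by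
    rw [map_add]; simp [Bvv B hB]
  have h2 : B (w + y + y) (-(2 • y)) = -2 * B w y := by
    rw [two_smul]
    simp only [map_neg, map_add, LinearMap.add_apply, Bvv B hB]
    ring
  rw [Qop, LinearMap.comp_apply, LinearMap.comp_apply, Bop_single, Bop_single, Bop_single,
    h1, h2]
  have h3 : w + y + y + -(2 • y) = w := by
    ext i; simp [two_smul]
  rw [h3]
  congr 1
  push_cast
  ring

lemma D_apply (D : ((Fin n → ℤ) →₀ ℚ) →ₗ[ℚ] ((Fin n → ℤ) →₀ ℚ)) (d : (Fin n → ℤ) → ℚ)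
    (hD : ∀ w a, D (Finsupp.single w a) = Finsupp.single w (d w * a))
    (f : (Fin n → ℤ) →₀ ℚ) (w : Fin n → ℤ) : (D f) w = d w * f w := by
  induction f using Finsupp.induction_linear with
  | zero => simp
  | add f g hf hg => simp [hf, hg]; ring
  | single w' a =>
    rw [hD]
    rcases eq_or_ne w' w with rfl | hne
    · simp
    · simp [Finsupp.single_apply, hne]

lemma sep_aux (D : ((Fin n → ℤ) →₀ ℚ) →ₗ[ℚ] ((Fin n → ℤ) →₀ ℚ)) (d : (Fin n → ℤ) → ℚ)
    (hD : ∀ w a, D (Finsupp.single w a) = Finsupp.single w (d w * a))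
    (I : Submodule ℚ ((Fin n → ℤ) →₀ ℚ)) (hDI : ∀ x ∈ I, D x ∈ I) (c : ℚ)
    (s : Finset ℚ) : ∀ f ∈ I, (∀ w ∈ f.support, d w = c ∨ d w ∈ s) →
      f.filter (fun w => d w = c) ∈ I := by
  induction s using Finset.induction_on with
  | empty =>
    intro f hf hsup
    have : f.filter (fun w => d w = c) = f := by
      ext w
      rw [Finsupp.filter_apply]
      split_ifs with h
      · rfl
      · by_cases hw : f w = 0
        · exact hw.symm
        · rcases hsup w (Finsupp.mem_support_iff.mpr hw) with h' | h'
          · exact absurd h' h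
          · exact absurd h' (Finset.notMem_empty _)
    rwa [this]
  | @insert c' s hc's ih =>
    intro f hf hsup
    rcases eq_or_ne c' c with rfl | hcc
    · refine ih f hf fun w hw => ?_
      rcases hsup w hw with h | h
      · exact Or.inl h
      · rcases Finset.mem_insert.mp h with h | h
        · exact Or.inl h
        · exact Or.inr h
    · set g := (c' - c)⁻¹ • (c' • f - D f) with hg
      have hgI : g ∈ I := Submodule.smul_mem _ _
        (Submodule.sub_mem _ (Submodule.smul_mem _ _ hf) (hDI f hf))
      have hgw : ∀ w, g w = (c' - c)⁻¹ * ((c' - d w) * f w) := by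
        intro w
        rw [hg, Finsupp.smul_apply, Finsupp.sub_apply, Finsupp.smul_apply,
          D_apply D d hD]
        simp only [smul_eq_mul]
        ring
      have hfilter : g.filter (fun w => d w = c) = f.filter (fun w => d w = c) := by
        ext w
        rw [Finsupp.filter_apply, Finsupp.filter_apply]
        split_ifs with h
        · rw [hgw, h]
          have : c' - c ≠ 0 := sub_ne_zero.mpr hcc
          field_simp
        · rfl
      have hgsup : ∀ w ∈ g.support, d w = c ∨ d w ∈ s := by
        intro w hw
        have hgw0 : g w ≠ 0 := Finsupp.mem_support_iff.mp hw
        have hfw0 : f w ≠ 0 := by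
          intro h0
          apply hgw0
          rw [hgw, h0]; ring
        rcases hsup w (Finsupp.mem_support_iff.mpr hfw0) with h | h
        · exact Or.inl h
        · rcases Finset.mem_insert.mp h with h | h
          · exfalso; apply hgw0; rw [hgw, h]; ring
          · exact Or.inr h
      have := ih g hgI hgsup
      rwa [hfilter] at this

lemma sep (D : ((Fin n → ℤ) →₀ ℚ) →ₗ[ℚ] ((Fin n → ℤ) →₀ ℚ)) (d : (Fin n → ℤ) → ℚ)
    (hD : ∀ w a, D (Finsupp.single w a) = Finsupp.single w (d w * a))
    (I : Submodule ℚ ((Fin n → ℤ) →₀ ℚ)) (hDI : ∀ x ∈ I, D x ∈ I) (c : ℚ)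
    (f : (Fin n → ℤ) →₀ ℚ) (hf : f ∈ I) :
    f.filter (fun w => d w = c) ∈ I := by
  refine sep_aux D d hD I hDI c ((f.support.image d).erase c) f hf fun w hw => ?_
  by_cases h : d w = c
  · exact Or.inl h
  · exact Or.inr (Finset.mem_erase.mpr ⟨h, Finset.mem_image_of_mem d hw⟩)

lemma exists_eval_ne (S : Finset (Fin n → ℤ)) (hS : ∀ u ∈ S, B u ≠ 0) :
    ∃ y, ∀ u ∈ S, B u y ≠ 0 := by
  classical
  induction S using Finset.induction_on with
  | empty => exact ⟨0, by simp⟩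
  | @insert u S hu ih =>
    obtain ⟨y, hy⟩ := ih fun u' hu' => hS u' (Finset.mem_insert_of_mem hu')
    have hBu : B u ≠ 0 := hS u (Finset.mem_insert_self u S)
    obtain ⟨z, hz⟩ : ∃ z, B u z ≠ 0 := by
      by_contra h
      push_neg at h
      exact hBu (LinearMap.ext h)
    set F : Finset ℚ := (insert u S).image fun u' => -(B u' y : ℚ) / (B u' z) with hF
    have : Set.Infinite {t : ℤ | (t : ℚ) ∉ (F : Set ℚ)} := by
      have hfin : Set.Finite {t : ℤ | (t : ℚ) ∈ (F : Set ℚ)} := by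
        apply Set.Finite.preimage (f := fun t : ℤ => (t : ℚ))
        · exact Set.injOn_of_injective (fun a b => by exact_mod_cast id)
        · exact F.finite_toSet
      have := hfin.infinite_compl
      simpa [Set.compl_setOf] using this
    obtain ⟨t, ht⟩ := this.nonempty
    refine ⟨y + t • z, fun u' hu' => ?_⟩
    have hval : B u' (y + t • z) = B u' y + t * B u' z := by
      rw [map_add, map_smul, smul_eq_mul]
    rw [hval]
    by_cases hz' : B u' z = 0
    · rcases Finset.mem_insert.mp hu' with rfl | hu'S
      · exact absurd hz' hz
      · simp [hz', hy u' hu'S]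
    · intro h0
      apply ht
      have : (t : ℚ) = -(B u' y : ℚ) / (B u' z) := by
        have hq : (B u' y : ℚ) + t * B u' z = 0 := by exact_mod_cast congrArg (Int.cast : ℤ → ℚ) h0
        field_simp
        linarith
      rw [this]
      exact Finset.mem_coe.mpr (Finset.mem_image_of_mem _ hu')

/-- Translation of a finitely supported function. -/
noncomputable def tr (x : Fin n → ℤ) (φ : (Fin n → ℤ) →₀ ℚ) : (Fin n → ℤ) →₀ ℚ :=
  φ.sum fun c q => Finsupp.single (c + x) q

lemma tr_eq (x : Fin n → ℤ) (φ : (Fin n → ℤ) →₀ ℚ) :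
    tr x φ = Finsupp.equivMapDomain (Equiv.addRight x) φ := by
  rw [Finsupp.equivMapDomain_eq_mapDomain, Finsupp.mapDomain]
  rfl

lemma tr_apply (x : Fin n → ℤ) (φ : (Fin n → ℤ) →₀ ℚ) (w : Fin n → ℤ) :
    tr x φ w = φ (w - x) := by
  rw [tr_eq, Finsupp.equivMapDomain_apply]
  rfl

lemma tr_tr (x y : Fin n → ℤ) (φ : (Fin n → ℤ) →₀ ℚ) :
    tr y (tr x φ) = tr (x + y) φ := by
  ext w
  rw [tr_apply, tr_apply, tr_apply]
  congr 1
  abel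

lemma tr_zero (φ : (Fin n → ℤ) →₀ ℚ) : tr 0 φ = φ := by
  ext w
  rw [tr_apply]
  simp

lemma mem_support_tr (x : Fin n → ℤ) (φ : (Fin n → ℤ) →₀ ℚ) (w : Fin n → ℤ) :
    w ∈ (tr x φ).support ↔ w - x ∈ φ.support := by
  rw [Finsupp.mem_support_iff, Finsupp.mem_support_iff, tr_apply]

lemma Bop_class (p : (Fin n → ℤ) →₀ ℚ) (w₀ : Fin n → ℤ)
    (hp : ∀ w ∈ p.support, ∀ y, B w y = B w₀ y) (y : Fin n → ℤ) :
    Bop B y p = (B w₀ y : ℚ) • tr y p := by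
  rw [Bop_apply, tr, Finsupp.smul_sum]
  refine Finsupp.sum_congr fun w hw => ?_
  rw [Finsupp.smul_single, hp w hw y, smul_eq_mul]

lemma tr_step (I : Submodule ℚ ((Fin n → ℤ) →₀ ℚ))
    (hT : ∀ y, ∀ x ∈ I, Bop B y x ∈ I) (φ : (Fin n → ℤ) →₀ ℚ)
    (hφ : ∀ c ∈ φ.support, B c = 0) (w y : Fin n → ℤ)
    (hmem : tr w φ ∈ I) (hy : B w y ≠ 0) : tr (w + y) φ ∈ I := by
  have hclass : ∀ w' ∈ (tr w φ).support, ∀ y', B w' y' = B w y' := by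
    intro w' hw' y'
    have h1 : B (w' - w) = 0 := hφ _ ((mem_support_tr w φ w').mp hw')
    have h2 : w' = (w' - w) + w := by abel
    rw [h2, map_add, LinearMap.add_apply, h1]
    simp
  have hB1 : Bop B y (tr w φ) = (B w y : ℚ) • tr (w + y) φ := by
    rw [Bop_class B _ w hclass y, tr_tr]
  have hne : (B w y : ℚ) ≠ 0 := Int.cast_ne_zero.mpr hy
  have : tr (w + y) φ = (B w y : ℚ)⁻¹ • Bop B y (tr w φ) := by
    rw [hB1, smul_smul, inv_mul_cancel₀ hne, one_smul]
  rw [this]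
  exact Submodule.smul_mem _ _ (hT y _ hmem)

lemma translates_mem (hB : ∀ x y, B x y = - B y x)
    (I : Submodule ℚ ((Fin n → ℤ) →₀ ℚ))
    (hT : ∀ y, ∀ x ∈ I, Bop B y x ∈ I) (φ : (Fin n → ℤ) →₀ ℚ)
    (hφ : ∀ c ∈ φ.support, B c = 0) (w₀ : Fin n → ℤ) (hw₀ : B w₀ ≠ 0)
    (hmem : tr w₀ φ ∈ I) :
    ∀ x, B x ≠ 0 → tr x φ ∈ I := by
  intro x hx
  by_cases h1 : B w₀ x = 0
  · obtain ⟨z, hz⟩ := exists_eval_ne B {w₀, x} (by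
      intro u hu
      rcases Finset.mem_insert.mp hu with rfl | hu
      · exact hw₀
      · rw [Finset.mem_singleton.mp hu]; exact hx)
    have hz₀ : B w₀ z ≠ 0 := hz w₀ (Finset.mem_insert_self _ _)
    have hzx : B x z ≠ 0 := hz x (Finset.mem_insert_of_mem (Finset.mem_singleton_self _))
    have s1 : tr (w₀ + z) φ ∈ I := tr_step B I hT φ hφ w₀ z hmem hz₀
    have key : B (w₀ + z) (x - (w₀ + z)) ≠ 0 := by
      rw [map_add, LinearMap.add_apply, map_sub, map_sub, map_add, map_add]
      have e1 : B z w₀ = - B w₀ z := hB z w₀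
      have e2 : B z x = - B x z := hB z x
      have e3 := Bvv B hB w₀
      have e4 := Bvv B hB z
      omega
    have s2 : tr ((w₀ + z) + (x - (w₀ + z))) φ ∈ I :=
      tr_step B I hT φ hφ (w₀ + z) _ s1 key
    have : (w₀ + z) + (x - (w₀ + z)) = x := by abel
    rwa [this] at s2
  · by_cases hxw : x = w₀
    · rwa [hxw]
    · have key : B w₀ (x - w₀) ≠ 0 := by
        rw [map_sub, Bvv B hB w₀, sub_zero]
        exact h1
      have s1 : tr (w₀ + (x - w₀)) φ ∈ I := tr_step B I hT φ hφ w₀ _ hmem key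
      have : w₀ + (x - w₀) = x := by abel
      rwa [this] at s1

lemma filter_congr_support (f : (Fin n → ℤ) →₀ ℚ) (p q : (Fin n → ℤ) → Prop)
    [DecidablePred p] [DecidablePred q]
    (h : ∀ w ∈ f.support, (p w ↔ q w)) : f.filter p = f.filter q := by
  ext w
  rw [Finsupp.filter_apply, Finsupp.filter_apply]
  by_cases hfw : f w = 0
  · split_ifs <;> simp [hfw]
  · exact if_congr (h w (Finsupp.mem_support_iff.mpr hfw)) rfl rfl

set_option maxHeartbeats 1000000 in
/-- Extraction of one primitive component of an element of an ideal. -/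
lemma extract (hB : ∀ x y, B x y = - B y x) (I : Submodule ℚ ((Fin n → ℤ) →₀ ℚ))
    (hT : ∀ y, ∀ x ∈ I, Bop B y x ∈ I) (f : (Fin n → ℤ) →₀ ℚ) (hf : f ∈ I)
    (w₀ : Fin n → ℤ) (hw₀s : w₀ ∈ f.support) (hw₀ : B w₀ ≠ 0) :
    ∃ φ : (Fin n → ℤ) →₀ ℚ, φ ≠ 0 ∧ (∀ c ∈ φ.support, B c = 0) ∧
      primitiveIdeal (fun a b => B a b) φ ≤ I ∧
      f.filter (fun w => B w = B w₀) ∈ primitiveIdeal (fun a b => B a b) φ ∧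
      f.filter (fun w => B w = B w₀) ∈ I := by
  classical
  -- choose a separating evaluation point y
  set S : Finset (Fin n → ℤ) :=
    ((f.support ×ˢ f.support).filter fun pr => B (pr.1 - pr.2) ≠ 0).image
      fun pr => pr.1 - pr.2 with hS
  obtain ⟨y, hy⟩ := exists_eval_ne B S (by
    intro u hu
    rw [hS] at hu
    obtain ⟨pr, hpr, rfl⟩ := Finset.mem_image.mp hu
    exact (Finset.mem_filter.mp hpr).2)
  set d : (Fin n → ℤ) → ℚ := fun w => ((-2 * (B w y)^3 : ℤ) : ℚ) with hd
  have hD : ∀ w a, Qop B y (Finsupp.single w a) = Finsupp.single w (d w * a) :=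
    fun w a => Qop_single B hB y w a
  have hDI : ∀ x ∈ I, Qop B y x ∈ I := by
    intro x hx
    rw [Qop]
    exact hT _ _ (hT _ _ (hT _ _ hx))
  -- the class filter
  have hpI : f.filter (fun w => d w = d w₀) ∈ I := sep (Qop B y) d hD I hDI (d w₀) f hf
  have hiff : ∀ w ∈ f.support, (d w = d w₀ ↔ B w = B w₀) := by
    intro w hw
    constructor
    · intro h
      have h1 : (-2 * (B w y)^3 : ℤ) = -2 * (B w₀ y)^3 := Int.cast_injective (α := ℚ) h
      have h2 : (B w y)^3 = (B w₀ y)^3 := by linarith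
      have h3 : B w y = B w₀ y :=
        (Odd.strictMono_pow (R := ℤ) (by decide : Odd 3)).injective h2
      by_contra hne
      have hu : B (w - w₀) ≠ 0 := by
        rw [map_sub]
        intro h0
        exact hne (sub_eq_zero.mp h0)
      have huS : w - w₀ ∈ S := by
        rw [hS]
        exact Finset.mem_image.mpr ⟨(w, w₀),
          Finset.mem_filter.mpr ⟨Finset.mem_product.mpr ⟨hw, hw₀s⟩, hu⟩, rfl⟩
      have := hy _ huS
      rw [map_sub, LinearMap.sub_apply] at this
      omega
    · intro h
      rw [hd]
      simp only
      rw [show B w y = B w₀ y from by rw [h]]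
  have hpeq : f.filter (fun w => d w = d w₀) = f.filter (fun w => B w = B w₀) :=
    filter_congr_support f _ _ hiff
  rw [hpeq] at hpI
  set p := f.filter (fun w => B w = B w₀) with hp
  have hsuppp : ∀ w ∈ p.support, B w = B w₀ := by
    intro w hw
    by_contra hne
    have : p w = 0 := by rw [hp, Finsupp.filter_apply, if_neg hne]
    exact Finsupp.mem_support_iff.mp hw this
  have hpw₀ : p w₀ = f w₀ := by
    rw [hp, Finsupp.filter_apply, if_pos rfl]
  -- the primitive datum
  set φ := tr (-w₀) p with hφdef
  have htrw₀ : tr w₀ φ = p := by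
    rw [hφdef, tr_tr]
    have : -w₀ + w₀ = 0 := by abel
    rw [this, tr_zero]
  have hφsupp : ∀ c ∈ φ.support, B c = 0 := by
    intro c hc
    have hmem : c - (-w₀) ∈ p.support := (mem_support_tr _ _ _).mp hc
    rw [sub_neg_eq_add] at hmem
    have h2 : B (c + w₀) = B w₀ := hsuppp _ hmem
    have h3 : B c + B w₀ = B w₀ := by rw [← map_add]; exact h2
    exact add_right_cancel (b := B w₀) (by rw [h3, zero_add])
  have hφne : φ ≠ 0 := by
    intro h0
    have : φ 0 = p w₀ := by
      rw [hφdef, tr_apply]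
      congr 1
      abel
    rw [h0] at this
    simp only [Finsupp.coe_zero, Pi.zero_apply] at this
    rw [hpw₀] at this
    exact Finsupp.mem_support_iff.mp hw₀s this.symm
  have hall : ∀ x, B x ≠ 0 → tr x φ ∈ I := by
    refine translates_mem B hB I hT φ hφsupp w₀ hw₀ ?_
    rwa [htrw₀]
  have hprimle : primitiveIdeal (fun a b => B a b) φ ≤ I := by
    rw [primitiveIdeal, Submodule.span_le]
    rintro v ⟨x, hx, rfl⟩
    have hBx : B x ≠ 0 := by
      intro h0
      exact hx fun y' => by rw [h0]; rfl
    exact hall x hBx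
  have hpmem : p ∈ primitiveIdeal (fun a b => B a b) φ := by
    rw [primitiveIdeal]
    refine Submodule.subset_span ⟨w₀, ?_, ?_⟩
    · intro hc
      exact hw₀ (LinearMap.ext hc)
    · exact htrw₀.symm
  exact ⟨φ, hφne, hφsupp, hprimle, hpmem, hpI⟩

end StmtAux

theorem stmt18 (n : ℕ) (B : (Fin n → ℤ) →ₗ[ℤ] (Fin n → ℤ) →ₗ[ℤ] ℤ)
    (hB : ∀ x y, B x y = - B y x)
    (I : Submodule ℚ ((Fin n → ℤ) →₀ ℚ)) :
    (∀ x ∈ I, ∀ y, brQ (fun a b => B a b) x y ∈ I) ↔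
      ∃ (Φ : Set ((Fin n → ℤ) →₀ ℚ)) (C₁ : Submodule ℚ ((Fin n → ℤ) →₀ ℚ)),
        (∀ φ ∈ Φ, φ ≠ 0 ∧ ∀ c ∈ φ.support, ∀ y, B c y = 0) ∧
        C₁ ≤ Submodule.span ℚ
          {v | ∃ z : Fin n → ℤ, (∀ y, B z y = 0) ∧ v = Finsupp.single z (1 : ℚ)} ∧
        I = C₁ ⊔ ⨆ φ ∈ Φ, primitiveIdeal (fun a b => B a b) φ := by
  classical
  set RS : Submodule ℚ ((Fin n → ℤ) →₀ ℚ) := Submodule.span ℚ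
    {v | ∃ z : Fin n → ℤ, (∀ y, B z y = 0) ∧ v = Finsupp.single z (1 : ℚ)} with hRS
  have mem_RS : ∀ f : (Fin n → ℤ) →₀ ℚ, (∀ w ∈ f.support, B w = 0) → f ∈ RS := by
    intro f hf
    rw [← Finsupp.sum_single f]
    refine Submodule.finsuppSum_mem _ _ _ _ fun w hw => ?_
    have h1 : Finsupp.single w (f w) = (f w) • Finsupp.single w (1 : ℚ) := by
      rw [Finsupp.smul_single, smul_eq_mul, mul_one]
    rw [h1]
    refine Submodule.smul_mem _ _ (Submodule.subset_span ⟨w, ?_, rfl⟩)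
    intro y
    rw [hf w (Finsupp.mem_support_iff.mpr hw)]
    rfl
  constructor
  · intro hI
    have hT : ∀ y, ∀ x ∈ I, Bop B y x ∈ I := (ideal_iff B I).mp hI
    set Φ : Set ((Fin n → ℤ) →₀ ℚ) :=
      {φ | φ ≠ 0 ∧ (∀ c ∈ φ.support, B c = 0) ∧ primitiveIdeal (fun a b => B a b) φ ≤ I}
      with hΦ
    set C₁ : Submodule ℚ ((Fin n → ℤ) →₀ ℚ) := I ⊓ RS with hC₁
    refine ⟨Φ, C₁, ?_, inf_le_right, ?_⟩
    · rintro φ ⟨h1, h2, h3⟩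
      exact ⟨h1, fun c hc y => by rw [h2 c hc]; rfl⟩
    · -- I = C₁ ⊔ ⨆ ...
      refine le_antisymm ?_ ?_
      · -- the hard direction, by induction on the number of non-radical support classes
        have main : ∀ k : ℕ, ∀ f ∈ I,
            (f.support.filter fun w => B w ≠ 0).card ≤ k →
            f ∈ C₁ ⊔ ⨆ φ ∈ Φ, primitiveIdeal (fun a b => B a b) φ := by
          intro k
          induction k with
          | zero =>
            intro f hf hcard
            have hempty : f.support.filter (fun w => B w ≠ 0) = ∅ :=
              Finset.card_eq_zero.mp (Nat.le_zero.mp hcard)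
            have hrad : ∀ w ∈ f.support, B w = 0 := by
              intro w hw
              by_contra hne
              have : w ∈ f.support.filter (fun w => B w ≠ 0) :=
                Finset.mem_filter.mpr ⟨hw, hne⟩
              rw [hempty] at this
              exact Finset.notMem_empty _ this
            exact le_sup_left (α := Submodule ℚ ((Fin n → ℤ) →₀ ℚ))
              (Submodule.mem_inf.mpr ⟨hf, mem_RS f hrad⟩)
          | succ k ih =>
            intro f hf hcard
            by_cases hrad : ∀ w ∈ f.support, B w = 0
            · exact le_sup_left (α := Submodule ℚ ((Fin n → ℤ) →₀ ℚ))
                (Submodule.mem_inf.mpr ⟨hf, mem_RS f hrad⟩)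
            · push_neg at hrad
              obtain ⟨w₀, hw₀s, hw₀⟩ := hrad
              obtain ⟨φ, hφne, hφsupp, hφle, hpmem, hpI⟩ :=
                extract B hB I hT f hf w₀ hw₀s hw₀
              set p := f.filter (fun w => B w = B w₀) with hp
              have hqI : f - p ∈ I := Submodule.sub_mem _ hf hpI
              have hqsupp : ∀ w, (f - p) w ≠ 0 → (¬ B w = B w₀ ∧ f w ≠ 0) := by
                intro w hw
                rw [Finsupp.sub_apply, hp, Finsupp.filter_apply] at hw
                by_cases hbw : B w = B w₀
                · rw [if_pos hbw, sub_self] at hw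
                  exact absurd rfl hw
                · rw [if_neg hbw, sub_zero] at hw
                  exact ⟨hbw, hw⟩
              have hqcard : ((f - p).support.filter fun w => B w ≠ 0).card ≤ k := by
                have hsub : (f - p).support.filter (fun w => B w ≠ 0) ⊆
                    (f.support.filter fun w => B w ≠ 0).erase w₀ := by
                  intro w hw
                  obtain ⟨hw1, hw2⟩ := Finset.mem_filter.mp hw
                  obtain ⟨hbw, hfw⟩ := hqsupp w (Finsupp.mem_support_iff.mp hw1)
                  refine Finset.mem_erase.mpr ⟨fun h0 => hbw (by rw [h0]),
                    Finset.mem_filter.mpr ⟨Finsupp.mem_support_iff.mpr hfw, hw2⟩⟩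
                have h1 := Finset.card_le_card hsub
                have h2 : w₀ ∈ f.support.filter fun w => B w ≠ 0 :=
                  Finset.mem_filter.mpr ⟨hw₀s, hw₀⟩
                rw [Finset.card_erase_of_mem h2] at h1
                omega
              have hqmem := ih (f - p) hqI hqcard
              have hφΦ : φ ∈ Φ := ⟨hφne, hφsupp, hφle⟩
              have hple : primitiveIdeal (fun a b => B a b) φ ≤
                  C₁ ⊔ ⨆ φ ∈ Φ, primitiveIdeal (fun a b => B a b) φ := by
                refine le_trans ?_ le_sup_right
                exact le_iSup₂ (f := fun φ (_ : φ ∈ Φ) =>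
                  primitiveIdeal (fun a b => B a b) φ) φ hφΦ
              have : f = p + (f - p) := by abel
              rw [this]
              exact Submodule.add_mem _ (hple hpmem) hqmem
        intro f hf
        exact main _ f hf le_rfl
      · -- easy direction
        refine sup_le inf_le_left ?_
        refine iSup₂_le fun φ hφ => hφ.2.2
  · -- converse: any such decomposition is an ideal
    rintro ⟨Φ, C₁, hΦ, hC₁, rfl⟩
    rw [ideal_iff]
    intro y₀
    have hsingle0 : ∀ z : Fin n → ℤ, (∀ y, B z y = 0) →
        Bop B y₀ (Finsupp.single z (1 : ℚ)) = 0 := by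
      intro z hz
      rw [Bop_single, hz y₀]
      simp
    intro x hx
    have : C₁ ⊔ ⨆ φ ∈ Φ, primitiveIdeal (fun a b => B a b) φ ≤
        Submodule.comap (Bop B y₀) (C₁ ⊔ ⨆ φ ∈ Φ, primitiveIdeal (fun a b => B a b) φ) := by
      refine sup_le ?_ ?_
      · refine le_trans hC₁ ?_
        rw [Submodule.span_le]
        rintro v ⟨z, hz, rfl⟩
        simp only [SetLike.mem_coe, Submodule.mem_comap, hsingle0 z hz]
        exact Submodule.zero_mem _
      · refine iSup₂_le fun φ hφ => ?_
        have hle : primitiveIdeal (fun a b => B a b) φ ≤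
            C₁ ⊔ ⨆ φ ∈ Φ, primitiveIdeal (fun a b => B a b) φ := by
          refine le_trans ?_ le_sup_right
          exact le_iSup₂ (f := fun φ (_ : φ ∈ Φ) =>
            primitiveIdeal (fun a b => B a b) φ) φ hφ
        rw [primitiveIdeal, Submodule.span_le]
        rintro v ⟨x', hx', rfl⟩
        simp only [SetLike.mem_coe, Submodule.mem_comap]
        have hclass : ∀ w ∈ (tr x' φ).support, ∀ y', B w y' = B x' y' := by
          intro w hw y'
          have h1 : w - x' ∈ φ.support := (mem_support_tr x' φ w).mp hw
          have h2 : ∀ y'', B (w - x') y'' = 0 := fun y'' => (hΦ φ hφ).2 _ h1 y''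
          have h3 : w = (w - x') + x' := by abel
          rw [h3, map_add, LinearMap.add_apply, h2]
          simp
        have hBval : Bop B y₀ (tr x' φ) = (B x' y₀ : ℚ) • tr y₀ (tr x' φ) :=
          Bop_class B _ x' hclass y₀
        have htreq : (φ.sum fun c qc => Finsupp.single (c + x') qc) = tr x' φ := rfl
        rw [htreq, hBval, tr_tr]
        by_cases hBx'y : B x' y₀ = 0
        · rw [hBx'y]
          simp only [Int.cast_zero, zero_smul]
          exact Submodule.zero_mem _
        · refine Submodule.smul_mem _ _ ?_
          refine hle ?_
          rw [primitiveIdeal]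
          refine Submodule.subset_span ⟨x' + y₀, ?_, rfl⟩
          intro hall
          apply hBx'y
          have h1 := hall y₀
          have h2 : B x' y₀ + B y₀ y₀ = 0 := by
            rw [← LinearMap.add_apply, ← map_add]
            exact h1
          have h3 := Bvv B hB y₀
          omega
    exact this hx
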